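/- arXiv:1810.11715 — 4 statements merged into one kernel-verified Lean document; each statement's English description precedes it below -/
import Mathlib

section
/- Consider the system Ẋ = k₁ − XZ, Ẏ = X − 4k₃Y² + (4k₄/k₅)Z − k₂Y^ε, Ż = k₃k₅Y² − k₄Z with positive parameters k₁,…,k₅ and ε > −2, where k₁ = k₂k₃k₅/k₄. Then the unique stationary point (X,Y,Z) with X > 0, Y > 0, Z > 0 is (X,Y,Z) = (k₂, 1, k₃k₅/k₄). -/
/-- For the dimensionless olfactory-neuron system with positive
parameters and `k₁ = k₂k₃k₅/k₄`, the unique positive stationary point is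
`(k₂, 1, k₃k₅/k₄)`. -/
theorem stationary_point_unique
    (k₁ k₂ k₃ k₄ k₅ ε : ℝ)
    (hk₁ : 0 < k₁) (hk₂ : 0 < k₂) (hk₃ : 0 < k₃) (hk₄ : 0 < k₄) (hk₅ : 0 < k₅)
    (hε : -2 < ε)
    (hrel : k₁ = k₂ * k₃ * k₅ / k₄)
    (X Y Z : ℝ) (hX : 0 < X) (hY : 0 < Y) (hZ : 0 < Z) :
    (k₁ - X * Z = 0 ∧
     X - 4 * k₃ * Y ^ 2 + (4 * k₄ / k₅) * Z - k₂ * Y ^ ε = 0 ∧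
     k₃ * k₅ * Y ^ 2 - k₄ * Z = 0)
    ↔ (X, Y, Z) = (k₂, 1, k₃ * k₅ / k₄) := by
  constructor
  · rintro ⟨h1, h2, h3⟩
    -- Z in terms of Y
    have hZeq : Z = k₃ * k₅ * Y ^ 2 / k₄ := by
      field_simp at h3 ⊢
      linarith
    -- X = k₂ * Y ^ ε
    have hXeq : X = k₂ * Y ^ ε := by
      rw [hZeq] at h2
      field_simp at h2
      nlinarith [mul_pos hk₅ hk₄]
    -- From h1 : k₁ = X * Z
    have h1' : k₂ * k₃ * k₅ / k₄ = (k₂ * Y ^ ε) * (k₃ * k₅ * Y ^ 2 / k₄) := by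
      rw [← hXeq, ← hZeq, ← hrel]; linarith
    have hkey : Y ^ ε * Y ^ (2:ℝ) = 1 := by
      have hY2 : Y ^ (2:ℝ) = Y ^ 2 := by
        rw [show ((2:ℝ)) = ((2:ℕ):ℝ) by norm_num, Real.rpow_natCast]
      rw [hY2]
      field_simp at h1'
      have := mul_pos (mul_pos hk₂ hk₃) hk₅
      nlinarith [h1']
    have hsum : Y ^ (ε + 2) = 1 := by
      rw [Real.rpow_add hY]; exact hkey
    have hY1 : Y = 1 := by
      have hlog : (ε + 2) * Real.log Y = 0 := by
        rw [← Real.log_rpow hY, hsum, Real.log_one]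
      have h2' : ε + 2 ≠ 0 := by linarith
      have : Real.log Y = 0 := by
        rcases mul_eq_zero.mp hlog with h | h
        · exact absurd h h2'
        · exact h
      have := Real.log_eq_zero.mp this
      rcases this with h | h | h
      · linarith
      · exact h
      · linarith
    subst hY1
    have hX1 : X = k₂ := by rw [hXeq, Real.one_rpow, mul_one]
    have hZ1 : Z = k₃ * k₅ / k₄ := by rw [hZeq]; ring
    rw [hX1, hZ1]
  · intro h
    obtain ⟨hx, hy, hz⟩ : X = k₂ ∧ Y = 1 ∧ Z = k₃ * k₅ / k₄ := by
      simpa [Prod.ext_iff] using h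
    subst hx hy hz
    refine ⟨?_, ?_, ?_⟩
    · rw [hrel]; ring
    · rw [Real.one_rpow]; field_simp; ring
    · field_simp; ring
end

section
/- Define ε = −2k₃k₄k₅(−k₄ + 8k₃k₄ + k₄² + k₃k₅) / ((−k₄ + k₃k₅)(−k₄² + 8k₃k₄² + k₄³ − k₃k₅ + k₃k₄k₅)). If k₃ > 0, k₄ > 0, k₅ > 0, 8k₃ < 1, 8k₃ + k₄ < 1 and 8k₃k₄ + k₃k₅ + k₄² < k₄, then the denominator (−k₄ + k₃k₅)(−k₄² + 8k₃k₄² + k₄³ − k₃k₅ + k₃k₄k₅) is nonzero and ε > 0. -/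
/-- under conditions (cond), the denominator in the formula for ε
is nonzero and ε > 0. -/
theorem epsilon_pos
    (k₃ k₄ k₅ : ℝ)
    (h₃ : 0 < k₃) (h₄ : 0 < k₄) (h₅ : 0 < k₅)
    (h1 : 8 * k₃ < 1) (h2 : 8 * k₃ + k₄ < 1)
    (h3 : 8 * k₃ * k₄ + k₃ * k₅ + k₄ ^ 2 < k₄) :
    (-k₄ + k₃ * k₅) *
      (-k₄ ^ 2 + 8 * k₃ * k₄ ^ 2 + k₄ ^ 3 - k₃ * k₅ + k₃ * k₄ * k₅) ≠ 0 ∧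
    0 < -(2 * k₃ * k₄ * k₅ * (-k₄ + 8 * k₃ * k₄ + k₄ ^ 2 + k₃ * k₅)) /
      ((-k₄ + k₃ * k₅) *
        (-k₄ ^ 2 + 8 * k₃ * k₄ ^ 2 + k₄ ^ 3 - k₃ * k₅ + k₃ * k₄ * k₅)) := by
  have hA : -k₄ + k₃ * k₅ < 0 := by nlinarith [sq_nonneg k₄, mul_pos h₃ h₄]
  have hB : -k₄ ^ 2 + 8 * k₃ * k₄ ^ 2 + k₄ ^ 3 - k₃ * k₅ + k₃ * k₄ * k₅ < 0 := by
    nlinarith [mul_pos h₃ h₅, mul_pos (mul_pos h₃ h₅) h₄, mul_pos h₃ h₄]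
  have hD : 0 < (-k₄ + k₃ * k₅) *
      (-k₄ ^ 2 + 8 * k₃ * k₄ ^ 2 + k₄ ^ 3 - k₃ * k₅ + k₃ * k₄ * k₅) :=
    mul_pos_of_neg_of_neg hA hB
  have hN : 0 < -(2 * k₃ * k₄ * k₅ * (-k₄ + 8 * k₃ * k₄ + k₄ ^ 2 + k₃ * k₅)) := by
    nlinarith [mul_pos (mul_pos (mul_pos h₃ h₄) h₅) (by linarith : (0:ℝ) < k₄ - 8 * k₃ * k₄ - k₄ ^ 2 - k₃ * k₅)]
  exact ⟨ne_of_gt hD, div_pos hN hD⟩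
end

section
/- Define k₂ = (−1 + 8k₃ + k₄)(−k₄ + k₃k₅)/(2k₃k₄k₅ − ε(−1 + k₄)(k₄ − k₃k₅)), where ε = −2k₃k₄k₅(−k₄ + 8k₃k₄ + k₄² + k₃k₅)/((−k₄ + k₃k₅)(−k₄² + 8k₃k₄² + k₄³ − k₃k₅ + k₃k₄k₅)). If k₃ > 0, k₄ > 0, k₅ > 0, 8k₃ < 1, 8k₃ + k₄ < 1 and 8k₃k₄ + k₃k₅ + k₄² < k₄, then both denominators are nonzero and k₂ > 0. -/
/-- under conditions (cond), both denominators in the formula for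
k₂ are nonzero and k₂ > 0. -/
theorem k2_pos
    (k₃ k₄ k₅ : ℝ)
    (h₃ : 0 < k₃) (h₄ : 0 < k₄) (h₅ : 0 < k₅)
    (h1 : 8 * k₃ < 1) (h2 : 8 * k₃ + k₄ < 1)
    (h3 : 8 * k₃ * k₄ + k₃ * k₅ + k₄ ^ 2 < k₄)
    (ε : ℝ)
    (hε : ε = -(2 * k₃ * k₄ * k₅ * (-k₄ + 8 * k₃ * k₄ + k₄ ^ 2 + k₃ * k₅)) /
      ((-k₄ + k₃ * k₅) *
        (-k₄ ^ 2 + 8 * k₃ * k₄ ^ 2 + k₄ ^ 3 - k₃ * k₅ + k₃ * k₄ * k₅))) :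
    (-k₄ + k₃ * k₅) *
      (-k₄ ^ 2 + 8 * k₃ * k₄ ^ 2 + k₄ ^ 3 - k₃ * k₅ + k₃ * k₄ * k₅) ≠ 0 ∧
    2 * k₃ * k₄ * k₅ - ε * (-1 + k₄) * (k₄ - k₃ * k₅) ≠ 0 ∧
    0 < (-1 + 8 * k₃ + k₄) * (-k₄ + k₃ * k₅) /
      (2 * k₃ * k₄ * k₅ - ε * (-1 + k₄) * (k₄ - k₃ * k₅)) := by
  have hk4lt1 : k₄ < 1 := by nlinarith
  have hks : k₃ * k₅ < k₄ := by nlinarith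
  have hf1 : -k₄ + k₃ * k₅ < 0 := by linarith
  have hf2 : -k₄ ^ 2 + 8 * k₃ * k₄ ^ 2 + k₄ ^ 3 - k₃ * k₅ + k₃ * k₄ * k₅ < 0 := by
    nlinarith [mul_pos (mul_pos h₃ h₅) (sub_pos.2 hk4lt1),
      mul_pos (pow_pos h₄ 2) (by linarith : (0:ℝ) < 1 - 8 * k₃ - k₄)]
  have hD1 : 0 < (-k₄ + k₃ * k₅) *
      (-k₄ ^ 2 + 8 * k₃ * k₄ ^ 2 + k₄ ^ 3 - k₃ * k₅ + k₃ * k₄ * k₅) :=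
    mul_pos_of_neg_of_neg hf1 hf2
  have hA : -k₄ + 8 * k₃ * k₄ + k₄ ^ 2 + k₃ * k₅ < 0 := by nlinarith
  have hεpos : 0 < ε := by
    rw [hε]
    apply div_pos _ hD1
    nlinarith [mul_pos (mul_pos (mul_pos h₃ h₄) h₅) (neg_pos.2 hA)]
  have hD2 : 0 < 2 * k₃ * k₄ * k₅ - ε * (-1 + k₄) * (k₄ - k₃ * k₅) := by
    have h5 : 0 < ε * (1 - k₄) * (k₄ - k₃ * k₅) :=
      mul_pos (mul_pos hεpos (by linarith)) (by linarith)
    nlinarith [mul_pos (mul_pos h₃ h₄) h₅]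
  refine ⟨ne_of_gt hD1, ne_of_gt hD2, div_pos ?_ hD2⟩
  have : -1 + 8 * k₃ + k₄ < 0 := by linarith
  exact mul_pos_of_neg_of_neg this hf1
end

section
/- Let q(x,y,z) = −(k₄/D)x² − (2k₃k₅/D)xy + y² − (k₄²(−1 + 8k₃ + k₄)/(k₃k₅D))xz − ((−k₄ + k₄² + k₃k₅)/(k₃k₄k₅))yz + ((k₄ − (1+8k₃)k₄² − k₃k₅ + k₃k₄k₅)/(4k₃²k₄k₅²))z², where D = (−1 + 8k₃)k₄² + k₄³ − k₃k₅ + k₃k₄k₅. Substitute x = ((k₄ − k₃k₅)/k₄)y − ((k₄ − k₃k₅)(k₄² + k₃k₅)/(2k₃k₄²k₅))z. If k₃ = k₄ = 1/10 and 0 < k₅ < 1/10, then the resulting quadratic form q₁(y,z) in (y,z) is positive definite. -/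
set_option maxHeartbeats 2000000

/-- the quadratic part of the Lyapunov function, restricted to
the linear approximation of the center manifold, is positive definite for
k₃ = k₄ = 1/10 and 0 < k₅ < 1/10. -/
theorem q1_positive_definite
    (k₃ k₄ k₅ : ℝ) (h₃ : k₃ = 1 / 10) (h₄ : k₄ = 1 / 10)
    (h₅ : 0 < k₅) (h₅' : k₅ < 1 / 10)
    (D : ℝ) (hD : D = (-1 + 8 * k₃) * k₄ ^ 2 + k₄ ^ 3 - k₃ * k₅ + k₃ * k₄ * k₅)
    (q : ℝ → ℝ → ℝ → ℝ)
    (hq : ∀ x y z, q x y z =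
      -(k₄ / D) * x ^ 2 - (2 * k₃ * k₅ / D) * x * y + y ^ 2 -
      (k₄ ^ 2 * (-1 + 8 * k₃ + k₄) / (k₃ * k₅ * D)) * x * z -
      ((-k₄ + k₄ ^ 2 + k₃ * k₅) / (k₃ * k₄ * k₅)) * y * z +
      ((k₄ - (1 + 8 * k₃) * k₄ ^ 2 - k₃ * k₅ + k₃ * k₄ * k₅) /
        (4 * k₃ ^ 2 * k₄ * k₅ ^ 2)) * z ^ 2)
    (h : ℝ → ℝ → ℝ)
    (hh : ∀ y z, h y z = ((k₄ - k₃ * k₅) / k₄) * y -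
      ((k₄ - k₃ * k₅) * (k₄ ^ 2 + k₃ * k₅) / (2 * k₃ * k₄ ^ 2 * k₅)) * z) :
    ∀ y z : ℝ, (y, z) ≠ (0, 0) → 0 < q (h y z) y z := by
  intro y z hne
  subst h₃ h₄
  have hk5 : (k₅ : ℝ) ≠ 0 := ne_of_gt h₅
  have hu : (0 : ℝ) < 1 + 90 * k₅ := by linarith
  have hu' : (1 + 90 * k₅ : ℝ) ≠ 0 := ne_of_gt hu
  have hD' : D = -(1 + 90 * k₅) / 1000 := by rw [hD]; ring
  have hDne : D ≠ 0 := by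
    rw [hD']; intro hc
    have h1000 : (1000 : ℝ) ≠ 0 := by norm_num
    have := (div_eq_zero_iff.mp hc).resolve_right h1000
    have : (1 + 90 * k₅ : ℝ) = 0 := by linarith
    exact hu' this
  have hh' : h y z = (1 - k₅) * y - ((1 - k₅) * (1 + 10 * k₅) / (2 * k₅)) * z := by
    rw [hh]; field_simp
  have hDinv : D⁻¹ = -(1000 * (1 + 90 * k₅)⁻¹) := by
    rw [hD', ← div_eq_mul_inv, inv_div, div_neg]
  have hq' : q (h y z) y z =
      (100 / (1 + 90 * k₅)) * (h y z) ^ 2 + (200 * k₅ / (1 + 90 * k₅)) * (h y z) * y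
      + y ^ 2 - (10 / (k₅ * (1 + 90 * k₅))) * (h y z) * z
      + ((9 - 10 * k₅) / k₅) * y * z + ((41 - 45 * k₅) / (2 * k₅ ^ 2)) * z ^ 2 := by
    rw [hq]
    simp only [div_eq_mul_inv, mul_inv, hDinv]
    field_simp
    ring
  have key : q (h y z) y z =
      ((101 + 9180 * k₅ + 8000 * k₅ ^ 2 - 9000 * k₅ ^ 3) * (2 * k₅ * y - z) ^ 2 +
       (101 + 18270 * k₅ + 824100 * k₅ ^ 2 - 207000 * k₅ ^ 3 -
        1610000 * k₅ ^ 4 + 900000 * k₅ ^ 5) * z ^ 2) /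
      (4 * k₅ ^ 2 * (1 + 90 * k₅) ^ 2) := by
    rw [hq', hh']
    field_simp
    ring
  rw [key]
  have ht3 : k₅ ^ 3 ≤ k₅ ^ 2 / 10 := by nlinarith [sq_nonneg k₅]
  have ht4 : k₅ ^ 4 ≤ k₅ ^ 2 / 100 := by nlinarith [sq_nonneg k₅, sq_nonneg (k₅ ^ 2)]
  have ht5 : 0 ≤ k₅ ^ 5 := by positivity
  have hN : 0 < 101 + 9180 * k₅ + 8000 * k₅ ^ 2 - 9000 * k₅ ^ 3 := by
    nlinarith [sq_nonneg k₅]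
  have hM : 0 < 101 + 18270 * k₅ + 824100 * k₅ ^ 2 - 207000 * k₅ ^ 3 -
      1610000 * k₅ ^ 4 + 900000 * k₅ ^ 5 := by
    nlinarith [sq_nonneg k₅]
  have hden : 0 < 4 * k₅ ^ 2 * (1 + 90 * k₅) ^ 2 := by positivity
  apply div_pos _ hden
  rcases eq_or_ne z 0 with hz | hz
  · have hy : y ≠ 0 := by
      intro hy; exact hne (by simp [hy, hz])
    have h2 : (2 * k₅ * y) ≠ 0 := by
      exact mul_ne_zero (mul_ne_zero two_ne_zero hk5) hy
    have hsq : 0 < (2 * k₅ * y - z) ^ 2 := by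
      rw [hz, sub_zero]; positivity
    nlinarith [mul_pos hN hsq, mul_nonneg hM.le (sq_nonneg z)]
  · have hsq : 0 < z ^ 2 := by positivity
    nlinarith [mul_pos hM hsq, mul_nonneg hN.le (sq_nonneg (2 * k₅ * y - z))]
end
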